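/- Let G be the join of two cycles of lengths c₁ ≥ 4 and c₂ ≥ 4. Then G satisfies: for every edge e of G, the link of e is a cycle of length at least 4; and for every triangle t of G, the link of t consists of exactly 2 vertices and no edges. -/

import Mathlib

open SimpleGraph
open Fin.NatCast Fin.CommRing

lemma fin_cast_inj (k : ℕ) (i j : ℕ) (hi : i < k+4) (hj : j < k+4) :
    ((i : Fin (k+4)) = (j : Fin (k+4))) ↔ i = j := by
  rw [Fin.ext_iff, Fin.val_natCast, Fin.val_natCast]
  simp [Nat.mod_eq_of_lt hi, Nat.mod_eq_of_lt hj]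

lemma fin_two_ne (k : ℕ) : (2 : Fin (k+4)) ≠ 0 := by
  have : ((2:ℕ) : Fin (k+4)) ≠ ((0:ℕ) : Fin (k+4)) := by
    rw [ne_eq, fin_cast_inj k 2 0 (by omega) (by omega)]; omega
  simpa using this

lemma fin_three_ne (k : ℕ) : (3 : Fin (k+4)) ≠ 0 := by
  have : ((3:ℕ) : Fin (k+4)) ≠ ((0:ℕ) : Fin (k+4)) := by
    rw [ne_eq, fin_cast_inj k 3 0 (by omega) (by omega)]; omega
  simpa using this

lemma fin_one_ne (k : ℕ) : (1 : Fin (k+4)) ≠ 0 := by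
  have : ((1:ℕ) : Fin (k+4)) ≠ ((0:ℕ) : Fin (k+4)) := by
    rw [ne_eq, fin_cast_inj k 1 0 (by omega) (by omega)]; omega
  simpa using this

lemma fin_sub_ne (k : ℕ) (a : Fin (k+4)) : a - 1 ≠ a + 1 := by
  intro h
  exact fin_two_ne k (by linear_combination -h)

lemma cadj (k : ℕ) (u v : Fin (k+4)) :
    (cycleGraph (k+4)).Adj u v ↔ u - v = 1 ∨ v - u = 1 := by
  have : k + 4 = (k+2) + 2 := by omega
  exact cycleGraph_adj

lemma cadj_iff (k : ℕ) (a p : Fin (k+4)) :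
    (cycleGraph (k+4)).Adj a p ↔ p = a - 1 ∨ p = a + 1 := by
  rw [cadj]
  constructor
  · rintro (h | h)
    · left; linear_combination -h
    · right; linear_combination h
  · rintro (h | h)
    · left; linear_combination -h
    · right; linear_combination h

lemma cadj_pred (k : ℕ) (a : Fin (k+4)) : (cycleGraph (k+4)).Adj a (a-1) := by
  rw [cadj_iff]; left; rfl

lemma cadj_succ (k : ℕ) (a : Fin (k+4)) : (cycleGraph (k+4)).Adj a (a+1) := by
  rw [cadj_iff]; right; rfl

lemma cnadj (k : ℕ) (a : Fin (k+4)) :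
    ¬ (cycleGraph (k+4)).Adj (a-1) (a+1) := by
  rw [cadj]
  rintro (h | h)
  · exact fin_three_ne k (by linear_combination -h)
  · exact fin_one_ne k (by linear_combination h)

lemma ctri (k : ℕ) (a b x : Fin (k+4)) (hab : (cycleGraph (k+4)).Adj a b)
    (hxa : (cycleGraph (k+4)).Adj x a) (hxb : (cycleGraph (k+4)).Adj x b) : False := by
  rw [cadj_iff] at hab hxa hxb
  rcases hab with h1 | h1 <;> rcases hxa with h2 | h2 <;> rcases hxb with h3 | h3 <;>
    subst h1 <;> rw [h2] at h3 <;>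
  first
  | exact fin_one_ne k (by linear_combination h3)
  | exact fin_one_ne k (by linear_combination -h3)
  | exact fin_two_ne k (by linear_combination h3)
  | exact fin_two_ne k (by linear_combination -h3)
  | exact fin_three_ne k (by linear_combination h3)
  | exact fin_three_ne k (by linear_combination -h3)

/-- The graph join: the disjoint union of `G` and `H` together with all edges
between `V(G)` and `V(H)`. -/
def graphJoin {α β : Type*} (G : SimpleGraph α) (H : SimpleGraph β) :
    SimpleGraph (α ⊕ β) where
  Adj x y :=
    match x, y with
    | Sum.inl a, Sum.inl b => G.Adj a b
    | Sum.inl _, Sum.inr _ => True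
    | Sum.inr _, Sum.inl _ => True
    | Sum.inr a, Sum.inr b => H.Adj a b
  symm := ⟨by rintro (a | a) (b | b) h <;> first | trivial | exact h.symm⟩
  loopless := ⟨by
    rintro (a | a) h
    · exact G.irrefl h
    · exact H.irrefl h⟩

variable {α β : Type*} {A : SimpleGraph α} {B : SimpleGraph β}

@[simp] lemma join_adj_ll {a b : α} : (graphJoin A B).Adj (Sum.inl a) (Sum.inl b) ↔ A.Adj a b := Iff.rfl
@[simp] lemma join_adj_lr {a : α} {b : β} : (graphJoin A B).Adj (Sum.inl a) (Sum.inr b) := trivial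
@[simp] lemma join_adj_rl {a : α} {b : β} : (graphJoin A B).Adj (Sum.inr b) (Sum.inl a) := trivial
@[simp] lemma join_adj_rr {a b : β} : (graphJoin A B).Adj (Sum.inr a) (Sum.inr b) ↔ B.Adj a b := Iff.rfl


section
variable {k₁ k₂ : ℕ}

local notation "V" => (Fin (k₁+4) ⊕ Fin (k₂+4))
local notation "GG" => graphJoin (cycleGraph (k₁+4)) (cycleGraph (k₂+4))

lemma pair_conc_r (c : Fin (k₂+4)) :
    ({Sum.inr (c-1), Sum.inr (c+1)} : Set V).ncard = 2 ∧
    ∀ a ∈ ({Sum.inr (c-1), Sum.inr (c+1)} : Set V),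
      ∀ b ∈ ({Sum.inr (c-1), Sum.inr (c+1)} : Set V), ¬ (GG).Adj a b := by
  constructor
  · exact Set.ncard_pair (by simp [fin_sub_ne k₂ c])
  · rintro a (rfl | rfl) b (rfl | rfl) <;> simp only [join_adj_rr] <;>
      first
      | exact SimpleGraph.irrefl _
      | exact cnadj k₂ c
      | exact fun h => cnadj k₂ c h.symm

lemma pair_conc_l (c : Fin (k₁+4)) :
    ({Sum.inl (c-1), Sum.inl (c+1)} : Set V).ncard = 2 ∧
    ∀ a ∈ ({Sum.inl (c-1), Sum.inl (c+1)} : Set V),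
      ∀ b ∈ ({Sum.inl (c-1), Sum.inl (c+1)} : Set V), ¬ (GG).Adj a b := by
  constructor
  · exact Set.ncard_pair (by simp [fin_sub_ne k₁ c])
  · rintro a (rfl | rfl) b (rfl | rfl) <;> simp only [join_adj_ll] <;>
      first
      | exact SimpleGraph.irrefl _
      | exact cnadj k₁ c
      | exact fun h => cnadj k₁ c h.symm

lemma tri_l (a b : Fin (k₁+4)) (c : Fin (k₂+4)) (hab : (cycleGraph (k₁+4)).Adj a b) :
    (GG).neighborSet (Sum.inl a) ∩ (GG).neighborSet (Sum.inl b) ∩ (GG).neighborSet (Sum.inr c)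
      = {Sum.inr (c-1), Sum.inr (c+1)} := by
  ext w
  rcases w with p | q <;>
    simp only [Set.mem_inter_iff, mem_neighborSet, join_adj_ll, join_adj_lr, join_adj_rl,
      join_adj_rr, Set.mem_insert_iff, Set.mem_singleton_iff, and_true, true_and,
      Sum.inr.injEq, reduceCtorEq, or_self, iff_false, not_and]
  · exact fun h1 h2 => (ctri k₁ a b p hab h1.symm h2.symm).elim
  · exact cadj_iff k₂ c q

lemma tri_r (a b : Fin (k₂+4)) (c : Fin (k₁+4)) (hab : (cycleGraph (k₂+4)).Adj a b) :
    (GG).neighborSet (Sum.inr a) ∩ (GG).neighborSet (Sum.inr b) ∩ (GG).neighborSet (Sum.inl c)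
      = {Sum.inl (c-1), Sum.inl (c+1)} := by
  ext w
  rcases w with p | q <;>
    simp only [Set.mem_inter_iff, mem_neighborSet, join_adj_ll, join_adj_lr, join_adj_rl,
      join_adj_rr, Set.mem_insert_iff, Set.mem_singleton_iff, and_true, true_and,
      Sum.inl.injEq, reduceCtorEq, or_self, iff_false, not_and]
  · exact cadj_iff k₁ c p
  · exact fun h1 h2 => (ctri k₂ a b q hab h1.symm h2.symm).elim

lemma link_ll (a b : Fin (k₁+4)) (hab : (cycleGraph (k₁+4)).Adj a b) :
    Nonempty (((GG).induce ((GG).neighborSet (Sum.inl a) ∩ (GG).neighborSet (Sum.inl b)))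
      ≃g cycleGraph (k₂+4)) := by
  set S : Set V := (GG).neighborSet (Sum.inl a) ∩ (GG).neighborSet (Sum.inl b) with hSdef
  have hmem : ∀ y : Fin (k₂+4), (Sum.inr y : V) ∈ S := by
    intro y
    simp only [hSdef, Set.mem_inter_iff, mem_neighborSet]
    exact ⟨join_adj_lr, join_adj_lr⟩
  have hS : ∀ w ∈ S, ∃ y, w = Sum.inr y := by
    rintro (p | q) hw
    · exfalso
      rw [hSdef, Set.mem_inter_iff, mem_neighborSet, mem_neighborSet] at hw
      exact ctri k₁ a b p hab (Adj.symm hw.1) (Adj.symm hw.2)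
    · exact ⟨q, rfl⟩
  have hbij : Function.Bijective (fun y : Fin (k₂+4) => (⟨Sum.inr y, hmem y⟩ : S)) := by
    constructor
    · intro y1 y2 h
      simpa using congrArg Subtype.val h
    · rintro ⟨w, hw⟩
      obtain ⟨y, rfl⟩ := hS w hw
      exact ⟨y, rfl⟩
  refine ⟨(RelIso.mk (Equiv.ofBijective _ hbij) ?_).symm⟩
  intro i j
  simp only [Equiv.ofBijective, Equiv.coe_fn_mk, comap_adj, Function.Embedding.coe_subtype]
  exact join_adj_rr

lemma link_rr (a b : Fin (k₂+4)) (hab : (cycleGraph (k₂+4)).Adj a b) :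
    Nonempty (((GG).induce ((GG).neighborSet (Sum.inr a) ∩ (GG).neighborSet (Sum.inr b)))
      ≃g cycleGraph (k₁+4)) := by
  set S : Set V := (GG).neighborSet (Sum.inr a) ∩ (GG).neighborSet (Sum.inr b) with hSdef
  have hmem : ∀ y : Fin (k₁+4), (Sum.inl y : V) ∈ S := by
    intro y
    simp only [hSdef, Set.mem_inter_iff, mem_neighborSet]
    exact ⟨join_adj_rl, join_adj_rl⟩
  have hS : ∀ w ∈ S, ∃ y, w = Sum.inl y := by
    rintro (p | q) hw
    · exact ⟨p, rfl⟩
    · exfalso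
      rw [hSdef, Set.mem_inter_iff, mem_neighborSet, mem_neighborSet] at hw
      exact ctri k₂ a b q hab (Adj.symm hw.1) (Adj.symm hw.2)
  have hbij : Function.Bijective (fun y : Fin (k₁+4) => (⟨Sum.inl y, hmem y⟩ : S)) := by
    constructor
    · intro y1 y2 h
      simpa using congrArg Subtype.val h
    · rintro ⟨w, hw⟩
      obtain ⟨y, rfl⟩ := hS w hw
      exact ⟨y, rfl⟩
  refine ⟨(RelIso.mk (Equiv.ofBijective _ hbij) ?_).symm⟩
  intro i j
  simp only [Equiv.ofBijective, Equiv.coe_fn_mk, comap_adj, Function.Embedding.coe_subtype]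
  exact join_adj_ll

lemma link_lr (a : Fin (k₁+4)) (b : Fin (k₂+4)) :
    Nonempty (((GG).induce ((GG).neighborSet (Sum.inl a) ∩ (GG).neighborSet (Sum.inr b)))
      ≃g cycleGraph 4) := by
  set S : Set V := (GG).neighborSet (Sum.inl a) ∩ (GG).neighborSet (Sum.inr b) with hSdef
  set f : Fin 4 → V := ![Sum.inl (a-1), Sum.inr (b-1), Sum.inl (a+1), Sum.inr (b+1)] with hf
  have hmem : ∀ i, f i ∈ S := by
    intro i
    fin_cases i <;>
      simp only [hf, hSdef, Set.mem_inter_iff, mem_neighborSet, Matrix.cons_val_zero,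
        Matrix.cons_val_one, Matrix.head_cons, Matrix.cons_val_two, Matrix.tail_cons,
        Matrix.cons_val_three, Matrix.cons_val_fin_one, Fin.isValue] <;>
      exact ⟨by first | exact cadj_pred _ _ | exact cadj_succ _ _ | exact join_adj_lr | exact join_adj_rl,
             by first | exact cadj_pred _ _ | exact cadj_succ _ _ | exact join_adj_lr | exact join_adj_rl⟩
  have hchar : ∀ w ∈ S, w = f 0 ∨ w = f 1 ∨ w = f 2 ∨ w = f 3 := by
    rintro (p | q) hw <;>
      rw [hSdef, Set.mem_inter_iff, mem_neighborSet, mem_neighborSet] at hw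
    · rcases (cadj_iff k₁ a p).1 hw.1 with h | h
      · left; simp [hf, h]
      · right; right; left; simp [hf, h]
    · rcases (cadj_iff k₂ b q).1 hw.2 with h | h
      · right; left; simp [hf, h]
      · right; right; right; simp [hf, h]
  have hbij : Function.Bijective (fun i : Fin 4 => (⟨f i, hmem i⟩ : S)) := by
    constructor
    · intro i j h
      have h' : f i = f j := congrArg Subtype.val h
      clear h
      rw [hf] at h'
      fin_cases i <;> fin_cases j <;> revert h' <;>
        simp [fin_sub_ne k₁ a, (fin_sub_ne k₁ a).symm, fin_sub_ne k₂ b,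
          (fin_sub_ne k₂ b).symm]
    · rintro ⟨w, hw⟩
      rcases hchar w hw with h | h | h | h
      exacts [⟨0, Subtype.ext h.symm⟩, ⟨1, Subtype.ext h.symm⟩,
        ⟨2, Subtype.ext h.symm⟩, ⟨3, Subtype.ext h.symm⟩]
  refine ⟨(RelIso.mk (Equiv.ofBijective _ hbij) ?_).symm⟩
  intro i j
  simp only [Equiv.ofBijective, Equiv.coe_fn_mk, comap_adj, Function.Embedding.coe_subtype]
  fin_cases i <;> fin_cases j <;>
    simp only [hf, Matrix.cons_val_zero, Matrix.cons_val_one, Matrix.head_cons,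
      Matrix.cons_val_two, Matrix.tail_cons, Matrix.cons_val_three, Matrix.cons_val_fin_one,
      Fin.isValue, join_adj_ll, join_adj_lr, join_adj_rl, join_adj_rr] <;>
    first
    | exact iff_of_true trivial (by decide)
    | exact iff_of_false (SimpleGraph.irrefl _) (by decide)
    | exact iff_of_false (cnadj k₁ a) (by decide)
    | exact iff_of_false (fun h => cnadj k₁ a h.symm) (by decide)
    | exact iff_of_false (cnadj k₂ b) (by decide)
    | exact iff_of_false (fun h => cnadj k₂ b h.symm) (by decide)
end


/-- Let `G` be the join of two cycles of lengths `c₁, c₂ ≥ 4`. Then for every edge `uv`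
of `G` the link of `uv` (the induced subgraph on `N_u ∩ N_v`) is a cycle of length at
least `4`, and for every triangle `{x, y, z}` of `G` the link of the triangle consists
of exactly `2` vertices and no edges. -/
theorem stmt_11 (c₁ c₂ : ℕ) (hc₁ : 4 ≤ c₁) (hc₂ : 4 ≤ c₂)
    (G : SimpleGraph (Fin c₁ ⊕ Fin c₂))
    (hG : G = graphJoin (cycleGraph c₁) (cycleGraph c₂)) :
    (∀ u v, G.Adj u v →
      ∃ m, 4 ≤ m ∧
        Nonempty ((G.induce (G.neighborSet u ∩ G.neighborSet v)) ≃g cycleGraph m)) ∧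
    (∀ x y z, G.Adj x y → G.Adj x z → G.Adj y z →
      (G.neighborSet x ∩ G.neighborSet y ∩ G.neighborSet z).ncard = 2 ∧
      ∀ a ∈ G.neighborSet x ∩ G.neighborSet y ∩ G.neighborSet z,
        ∀ b ∈ G.neighborSet x ∩ G.neighborSet y ∩ G.neighborSet z, ¬ G.Adj a b) := by
  subst hG
  obtain ⟨k₁, rfl⟩ : ∃ k, c₁ = k + 4 := ⟨c₁ - 4, by omega⟩
  obtain ⟨k₂, rfl⟩ : ∃ k, c₂ = k + 4 := ⟨c₂ - 4, by omega⟩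
  constructor
  · rintro (a | a) (b | b) huv
    · exact ⟨k₂ + 4, by omega, link_ll a b huv⟩
    · exact ⟨4, le_refl 4, link_lr a b⟩
    · refine ⟨4, le_refl 4, ?_⟩
      rw [Set.inter_comm]
      exact link_lr b a
    · exact ⟨k₁ + 4, by omega, link_rr a b huv⟩
  · rintro (x | x) (y | y) (z | z) hxy hxz hyz
    · exact (ctri k₁ x y z hxy (Adj.symm hxz) (Adj.symm hyz)).elim
    · rw [tri_l x y z hxy]
      exact pair_conc_r z
    · rw [Set.inter_right_comm, tri_l x z y hxz]
      exact pair_conc_r y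
    · rw [Set.inter_assoc,
        Set.inter_comm ((graphJoin (cycleGraph (k₁+4)) (cycleGraph (k₂+4))).neighborSet (Sum.inl x)),
        tri_r y z x hyz]
      exact pair_conc_l x
    · rw [Set.inter_assoc,
        Set.inter_comm ((graphJoin (cycleGraph (k₁+4)) (cycleGraph (k₂+4))).neighborSet (Sum.inr x)),
        tri_l y z x hyz]
      exact pair_conc_r x
    · rw [Set.inter_right_comm, tri_r x z y hxz]
      exact pair_conc_l y
    · rw [tri_r x y z hxy]
      exact pair_conc_l z
    · exact (ctri k₂ x y z hxy (Adj.symm hxz) (Adj.symm hyz)).elim
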